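/- Let m ≥ 0 be an integer, H > 0, δ > 0, and a_m < a_{m+1} with 2δ < a_{m+1} - a_m. Suppose R: ℝ → ℝ satisfies 0 ≤ R(x) ≤ (m+1)H for x ≤ a_m and R(x) = -((m+1)H/δ)(x - a_m) for x ≥ a_m. Define R⁺ = R + (2 + 1/(m+1))·max(0, -R), R⁺⁺ = R⁺ - 2·max(0, R⁺ - (m+2)H·(a_{m+1} - a_m)/(2δ)), and R' = min(R⁺⁺, (m+2)H). Then R'(x) = R(x) for x < a_m; R'(x) = ((m+2)H/δ)(x - a_m) for x ∈ [a_m, a_m + δ]; R'(x) = (m+2)H for x ∈ [a_m + δ, a_{m+1} - δ]; and R'(x) = -((m+2)H/δ)(x - a_{m+1}) for x ≥ a_{m+1} - δ. -/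

import Mathlib

/-- Induction step of the sequential trapezoid construction: three one-neuron residual
blocks turn the steep negative tail of `R` on `[a_m, ∞)` into a trapezoid of height
`(m+2)H` on `[a_m, a_{m+1}]` with a new steep negative tail at `a_{m+1}`, leaving `R`
unchanged on `(-∞, a_m)`. -/
theorem trapezoid_step (m : ℕ) (H δ am am1 : ℝ) (hH : 0 < H) (hδ : 0 < δ)
    (hlt : am < am1) (h2δ : 2 * δ < am1 - am) (R : ℝ → ℝ)
    (hRle : ∀ x : ℝ, x ≤ am → 0 ≤ R x ∧ R x ≤ ((m : ℝ) + 1) * H)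
    (hRge : ∀ x : ℝ, am ≤ x → R x = -(((m : ℝ) + 1) * H / δ) * (x - am)) :
    let Rp : ℝ → ℝ := fun x => R x + (2 + 1 / ((m : ℝ) + 1)) * max 0 (-(R x))
    let Rpp : ℝ → ℝ := fun x =>
      Rp x - 2 * max 0 (Rp x - ((m : ℝ) + 2) * H * (am1 - am) / (2 * δ))
    let R' : ℝ → ℝ := fun x => min (Rpp x) (((m : ℝ) + 2) * H)
    (∀ x : ℝ, x < am → R' x = R x) ∧
    (∀ x ∈ Set.Icc am (am + δ), R' x = ((m : ℝ) + 2) * H / δ * (x - am)) ∧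
    (∀ x ∈ Set.Icc (am + δ) (am1 - δ), R' x = ((m : ℝ) + 2) * H) ∧
    (∀ x : ℝ, am1 - δ ≤ x → R' x = -(((m : ℝ) + 2) * H / δ) * (x - am1)) := by
  intro Rp Rpp R'
  have hm1 : (0:ℝ) < (m:ℝ) + 1 := by positivity
  have hm2 : (0:ℝ) < (m:ℝ) + 2 := by positivity
  set c2 : ℝ := ((m:ℝ) + 2) * H / δ with hc2
  have hc2pos : 0 < c2 := by positivity
  set T : ℝ := ((m:ℝ) + 2) * H * (am1 - am) / (2 * δ) with hT
  have hTeq : T = c2 * (am1 - am) / 2 := by rw [hT, hc2]; ring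
  have hTlit : ((m:ℝ) + 2) * H * (am1 - am) / (2 * δ) = c2 * (am1 - am) / 2 := by
    rw [hc2]; ring
  have hTgt : ((m:ℝ) + 2) * H < T := by
    rw [hTeq]
    have : c2 * δ = ((m:ℝ) + 2) * H := by rw [hc2]; exact div_mul_cancel₀ _ hδ.ne'
    nlinarith
  -- Rp for x ≥ am
  have hRp_ge : ∀ x, am ≤ x → Rp x = c2 * (x - am) := by
    intro x hx
    have hR := hRge x hx
    have hnn : 0 ≤ (((m:ℝ) + 1) * H / δ) * (x - am) := by
      have : 0 ≤ x - am := by linarith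
      positivity
    simp only [Rp, hR]
    rw [show -(-(((m:ℝ) + 1) * H / δ) * (x - am)) = ((m:ℝ) + 1) * H / δ * (x - am) by ring,
      max_eq_right hnn, hc2]
    field_simp
    ring
  -- Rp for x ≤ am
  have hRp_le : ∀ x, x ≤ am → Rp x = R x := by
    intro x hx
    have h := (hRle x hx).1
    simp only [Rp, max_eq_left (by linarith : -(R x) ≤ 0)]
    ring
  -- Rpp for x ≤ am
  have hRpp_le : ∀ x, x ≤ am → Rpp x = R x := by
    intro x hx
    have h := (hRle x hx).2
    simp only [Rpp, hRp_le x hx]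
    rw [max_eq_left (by linarith : R x - T ≤ 0)]
    ring
  -- Rpp for am ≤ x ≤ midpoint
  have hRpp_mid1 : ∀ x, am ≤ x → x ≤ (am + am1) / 2 → Rpp x = c2 * (x - am) := by
    intro x hx hx2
    simp only [Rpp, hRp_ge x hx]
    rw [hTlit, max_eq_left (by nlinarith : c2 * (x - am) - c2 * (am1 - am) / 2 ≤ 0)]
    ring
  -- Rpp for x ≥ midpoint
  have hRpp_mid2 : ∀ x, (am + am1) / 2 ≤ x → Rpp x = -(c2 * (x - am1)) := by
    intro x hx
    have hxam : am ≤ x := by linarith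
    simp only [Rpp, hRp_ge x hxam]
    rw [hTlit, max_eq_right (by nlinarith : 0 ≤ c2 * (x - am) - c2 * (am1 - am) / 2)]
    ring
  have hc2δ : c2 * δ = ((m:ℝ) + 2) * H := by rw [hc2]; exact div_mul_cancel₀ _ hδ.ne'
  refine ⟨?_, ?_, ?_, ?_⟩
  · intro x hx
    have h := (hRle x (le_of_lt hx)).2
    simp only [R', hRpp_le x (le_of_lt hx)]
    exact min_eq_left (by nlinarith)
  · rintro x ⟨hx1, hx2⟩
    have hmid : x ≤ (am + am1) / 2 := by linarith
    simp only [R', hRpp_mid1 x hx1 hmid]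
    rw [min_eq_left (by nlinarith : c2 * (x - am) ≤ ((m:ℝ) + 2) * H)]
  · rintro x ⟨hx1, hx2⟩
    rcases le_total x ((am + am1) / 2) with h | h
    · simp only [R', hRpp_mid1 x (by linarith) h]
      exact min_eq_right (by nlinarith)
    · simp only [R', hRpp_mid2 x h]
      exact min_eq_right (by nlinarith)
  · intro x hx
    have hmid : (am + am1) / 2 ≤ x := by linarith
    simp only [R', hRpp_mid2 x hmid]
    rw [min_eq_left (by nlinarith : -(c2 * (x - am1)) ≤ ((m:ℝ) + 2) * H)]
    rw [hc2]; ring
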